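/- For A = {a,b,c} and the profile σ with k voters ranking a≻b≻c, k voters ranking a≻c≻b, and k voters ranking b≻c≻a, where k ≥ 2, the expected Kendall-Tau disagreement of plurality across a random split satisfies E[KT(f_p(σ^(1)), f_p(σ^(2)))] ≤ 1 + 2^{−2k} + 2^{−k} ≤ 1.3125. -/

import Mathlib

open scoped Classical

noncomputable section

/-- A strict ranking of the alternatives `A` among `m` positions: each alternative is
assigned its (0-indexed) position. -/
abbrev Ranking (A : Type*) (m : ℕ) := A ≃ Fin m

/-- A weak ranking: a complete and transitive binary relation (ties allowed).
`ge a b` means `a` is ranked weakly above `b`. -/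
structure WeakRanking (A : Type*) where
  ge : A → A → Prop
  total : ∀ a b, ge a b ∨ ge b a
  trans : ∀ a b c, ge a b → ge b c → ge a c

namespace WeakRanking

variable {A : Type*}

/-- `a` is ranked strictly above `b`. -/
def strict (r : WeakRanking A) (a b : A) : Prop := r.ge a b ∧ ¬ r.ge b a

/-- `a` and `b` are tied. -/
def tied (r : WeakRanking A) (a b : A) : Prop := r.ge a b ∧ r.ge b a

/-- The reversed weak ranking. -/
def rev (r : WeakRanking A) : WeakRanking A where
  ge a b := r.ge b a
  total a b := r.total b a
  trans _ _ _ h1 h2 := r.trans _ _ _ h2 h1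

/-- The all-tied weak ranking. -/
def allTied (A : Type*) : WeakRanking A :=
  ⟨fun _ _ => True, fun _ _ => Or.inl trivial, fun _ _ _ _ _ => trivial⟩

end WeakRanking

variable {A : Type*} {m : ℕ}

/-- The weak ranking induced by a strict ranking (smaller position = ranked higher). -/
def Ranking.toWeak (r : Ranking A m) : WeakRanking A where
  ge a b := r a ≤ r b
  total a b := le_total _ _
  trans _ _ _ h1 h2 := le_trans h1 h2

/-- The position-reversal permutation. -/
def finRevPerm (m : ℕ) : Equiv.Perm (Fin m) :=
  ⟨Fin.rev, Fin.rev, Fin.rev_rev, Fin.rev_rev⟩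

/-- The reversed strict ranking. -/
def Ranking.revR (r : Ranking A m) : Ranking A m := r.trans (finRevPerm m)

/-- Kendall-Tau distance with ties between two weak rankings: the sum over unordered pairs
of distinct alternatives of `D + T/2`, realized as half the sum over ordered pairs. -/
def KT [Fintype A] (r1 r2 : WeakRanking A) : ℝ :=
  (∑ p ∈ Finset.univ.offDiag,
      ((if (r1.strict p.1 p.2 ∧ r2.strict p.2 p.1) ∨ (r1.strict p.2 p.1 ∧ r2.strict p.1 p.2)
          then (1 : ℝ) else 0)
        + (if r1.tied p.1 p.2 ∨ r2.tied p.1 p.2 then (1 : ℝ) else 0) / 2)) / 2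

/-- A profile: the list of the voters' strict rankings. -/
abbrev Profile (A : Type*) (m : ℕ) := List (Ranking A m)

/-- A social welfare function. -/
abbrev SWF (A : Type*) (m : ℕ) := Profile A m → WeakRanking A

/-- Reverse every voter's ranking. -/
def revProfile (σ : Profile A m) : Profile A m := σ.map Ranking.revR

/-- A monotone positional scoring vector `1 = s₁ ≥ s₂ ≥ … ≥ sₘ = 0`. -/
structure ScoreVec (m : ℕ) where
  s : Fin m → ℝ
  anti : Antitone s
  first : ∀ h : 0 < m, s ⟨0, h⟩ = 1
  last : ∀ h : 0 < m, s ⟨m - 1, Nat.sub_lt h Nat.one_pos⟩ = 0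

/-- Total score of alternative `a` in profile `σ`. -/
def totalScore (sv : ScoreVec m) (σ : Profile A m) (a : A) : ℝ :=
  (σ.map fun r => sv.s (r a)).sum

/-- The positional scoring rule associated to a scoring vector. -/
def posSWF (sv : ScoreVec m) : SWF A m := fun σ =>
  { ge := fun a b => totalScore sv σ b ≤ totalScore sv σ a
    total := fun _ _ => le_total _ _
    trans := fun _ _ _ h1 h2 => le_trans h2 h1 }

/-- The plurality scoring vector `(1,0,…,0)`. -/
def pluralityVec (m : ℕ) (hm : 2 ≤ m) : ScoreVec m where
  s i := if i.val = 0 then 1 else 0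
  anti := by
    intro i j hij
    have h' : i.val ≤ j.val := hij
    dsimp only
    by_cases hj : j.val = 0
    · have hi : i.val = 0 := by omega
      simp [hi, hj]
    · by_cases hi : i.val = 0 <;> simp [hi, hj]
  first h := by simp
  last h := by
    have h' : m - 1 ≠ 0 := by omega
    simp [h']

/-- The veto scoring vector `(1,…,1,0)`. -/
def vetoVec (m : ℕ) (hm : 2 ≤ m) : ScoreVec m where
  s i := if i.val = m - 1 then 0 else 1
  anti := by
    intro i j hij
    have h' : i.val ≤ j.val := hij
    dsimp only
    by_cases hi : i.val = m - 1
    · have hj : j.val = m - 1 := by have := j.isLt; omega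
      simp [hi, hj]
    · by_cases hj : j.val = m - 1 <;> simp [hi, hj]
  first h := by
    have h' : (0 : ℕ) ≠ m - 1 := by omega
    simp [h']
  last h := by simp

/-- The reverse scoring vector, `s'_j = 1 - s_{m+1-j}`. -/
def ScoreVec.revVec (sv : ScoreVec m) : ScoreVec m where
  s j := 1 - sv.s j.rev
  anti := by
    intro i j hij
    have h1 : j.rev ≤ i.rev := by
      simp only [Fin.le_def, Fin.val_rev]
      have h' : i.val ≤ j.val := hij
      omega
    have h2 := sv.anti h1
    dsimp only
    linarith
  first h := by
    have h1 : (⟨0, h⟩ : Fin m).rev = ⟨m - 1, Nat.sub_lt h Nat.one_pos⟩ := by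
      ext
      simp [Fin.val_rev]
    rw [h1, sv.last h]
    ring
  last h := by
    have h1 : (⟨m - 1, Nat.sub_lt h Nat.one_pos⟩ : Fin m).rev = ⟨0, h⟩ := by
      ext
      simp only [Fin.val_rev]
      omega
    rw [h1, sv.first h]
    ring

/-- One side of the split of the profile `σ` given by assignment `β`. -/
def subProfile (σ : Profile A m) (β : Fin σ.length → Bool) (b : Bool) : Profile A m :=
  ((List.finRange σ.length).filter fun i => β i == b).map σ.get

/-- Apply an SWF, producing the all-tied ranking on an empty (sub)profile. -/
def applySplit (f : SWF A m) (σ : Profile A m) : WeakRanking A :=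
  if σ = [] then WeakRanking.allTied A else f σ

/-- Expected Kendall-Tau disagreement of `f` between the two sides of a uniformly random
split of `σ` (each voter placed independently and uniformly on one of the two sides). -/
def expDisagree [Fintype A] (f : SWF A m) (σ : Profile A m) : ℝ :=
  (∑ β : Fin σ.length → Bool,
      KT (applySplit f (subProfile σ β true)) (applySplit f (subProfile σ β false)))
    / 2 ^ σ.length

/-- Aggregation by Consistency over a set of SWFs: the rules minimizing expected
disagreement across a random split. -/
def AbC [Fintype A] (F : Set (SWF A m)) (σ : Profile A m) : Set (SWF A m) :=
  {f | f ∈ F ∧ ∀ g ∈ F, expDisagree f σ ≤ expDisagree g σ}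

/-- Aggregation by Consistency over a set of positional scoring vectors. -/
def AbCVec [Fintype A] (F : Set (ScoreVec m)) (σ : Profile A m) : Set (ScoreVec m) :=
  {sv | sv ∈ F ∧ ∀ sv' ∈ F, expDisagree (posSWF sv) σ ≤ expDisagree (posSWF sv') σ}

/-- All permutations of the positions that fix every position outside `S`. -/
def permsOn (S : Finset (Fin m)) : List (Equiv.Perm (Fin m)) :=
  (Finset.univ.filter fun π : Equiv.Perm (Fin m) => ∀ i ∉ S, π i = i).toList

/-- The `k`-shuffling of profile `σ` with respect to the set of positions `S`: each voter's
ranking is replaced by `k·m!` copies, split evenly among the `|S|!` permutations of `S`. -/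
def shuffle (S : Finset (Fin m)) (k : ℕ) (σ : Profile A m) : Profile A m :=
  σ.flatMap fun r =>
    (permsOn S).flatMap fun π =>
      List.replicate (k * Nat.factorial m / Nat.factorial S.card) (r.trans π)

/-- The positions `2,…,m` (0-indexed: `1,…,m-1`). -/
def tailPositions (m : ℕ) : Finset (Fin m) := Finset.univ.filter fun i => 1 ≤ i.val

/-- Number of voters ranking `a` first. -/
def topCount (σ : Profile A m) (a : A) : ℕ := σ.countP fun r => (r a).val == 0

/-- A weak ranking has no ties among distinct alternatives. -/
def NoTies (w : WeakRanking A) : Prop := ∀ a b : A, a ≠ b → ¬ w.tied a b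

/-- Probability (over a uniformly random split of `σ`) that the outputs of `f` on the two
sides order `a` and `b` strictly oppositely. -/
def probD [Fintype A] (f : SWF A m) (σ : Profile A m) (a b : A) : ℝ :=
  ((Finset.univ.filter fun β : Fin σ.length → Bool =>
      ((applySplit f (subProfile σ β true)).strict a b ∧
        (applySplit f (subProfile σ β false)).strict b a) ∨
      ((applySplit f (subProfile σ β true)).strict b a ∧
        (applySplit f (subProfile σ β false)).strict a b)).card : ℝ) / 2 ^ σ.length

/-- Probability (over a uniformly random split of `σ`) that `a` and `b` are tied in the
output of `f` on at least one side. -/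
def probT [Fintype A] (f : SWF A m) (σ : Profile A m) (a b : A) : ℝ :=
  ((Finset.univ.filter fun β : Fin σ.length → Bool =>
      (applySplit f (subProfile σ β true)).tied a b ∨
      (applySplit f (subProfile σ β false)).tied a b).card : ℝ) / 2 ^ σ.length

/-- A rule picking rule over sets of positional scoring vectors. -/
abbrev RPRVec (A : Type*) (m : ℕ) := Set (ScoreVec m) → Profile A m → Set (ScoreVec m)

/-- An RPR returns a nonempty subset of the candidate rules. -/
def IsRPR (Z : RPRVec A m) : Prop := ∀ F σ, Z F σ ⊆ F ∧ (Z F σ).Nonempty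

/-- Anonymity of an RPR: invariance under permuting voters. -/
def AnonymousRPR (Z : RPRVec A m) : Prop :=
  ∀ (F : Set (ScoreVec m)) (σ σ' : Profile A m), σ.Perm σ' → Z F σ = Z F σ'

/-- Reversal symmetry of an RPR. -/
def ReversalSymmetric (Z : RPRVec A m) : Prop :=
  ∀ F : Set (ScoreVec m), ScoreVec.revVec '' F = F →
    ∀ σ : Profile A m, ScoreVec.revVec '' (Z F σ) = Z F (revProfile σ)

/-- Plurality-shuffling consistency of an RPR. -/
def PSConsistent (hm : 2 ≤ m) (Z : RPRVec A m) : Prop :=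
  ∀ F : Set (ScoreVec m), F.Finite → pluralityVec m hm ∈ F →
    ∀ σ : Profile A m, NoTies (posSWF (pluralityVec m hm) σ) →
      ∃ k : ℕ, 1 ≤ k ∧ ∀ k', k ≤ k' →
        Z F (shuffle (tailPositions m) k' σ) = {pluralityVec m hm}

/-- Union consistency of an RPR. -/
def UnionConsistent (Z : RPRVec A m) : Prop :=
  ∀ (F : Set (ScoreVec m)) (σa σb : Profile A m), (Z F σa ∩ Z F σb).Nonempty →
    Z F (σa ++ σb) = Z F σa ∩ Z F σb

/-- The welfare-maximizing RPR with utility function `u`. -/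
def welfareMax (u : Ranking A m → WeakRanking A → ℝ) : RPRVec A m := fun F σ =>
  {sv | sv ∈ F ∧ ∀ sv' ∈ F,
      (σ.map fun r => u r (posSWF sv' σ)).sum ≤ (σ.map fun r => u r (posSWF sv σ)).sum}

/-- The SWF induced by a (vector-valued) RPR, where it is singleton-valued. -/
def inducedVec (Z : RPRVec A m) (F : Set (ScoreVec m)) : SWF A m := fun σ =>
  if h : ∃ sv, Z F σ = {sv} then posSWF h.choose σ else WeakRanking.allTied A

/-- The SWF induced by an (SWF-valued) RPR, where it is singleton-valued. -/
def inducedSWF (Z : Set (SWF A m) → Profile A m → Set (SWF A m)) (F : Set (SWF A m)) :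
    SWF A m := fun σ =>
  if h : ∃ f, Z F σ = {f} then h.choose σ else WeakRanking.allTied A

/-- The SWF induced by AbC over scoring vectors. -/
def inducedAbCVec [Fintype A] (F : Set (ScoreVec m)) : SWF A m := fun σ =>
  if h : ∃ sv, AbCVec F σ = {sv} then posSWF h.choose σ else WeakRanking.allTied A

/-- Anonymity of an SWF. -/
def AnonymousSWF (f : SWF A m) : Prop :=
  ∀ σ σ' : Profile A m, σ.Perm σ' → f σ = f σ'

/-- Relabeling of a weak ranking along a permutation of the alternatives. -/
def permuteWeak (π : Equiv.Perm A) (w : WeakRanking A) : WeakRanking A where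
  ge a b := w.ge (π.symm a) (π.symm b)
  total a b := w.total _ _
  trans _ _ _ h1 h2 := w.trans _ _ _ h1 h2

/-- Neutrality of an SWF: permuting the alternatives permutes the output accordingly. -/
def NeutralSWF (f : SWF A m) : Prop :=
  ∀ (π : Equiv.Perm A) (σ : Profile A m),
    f (σ.map fun r => π.symm.trans r) = permuteWeak π (f σ)

/-- `a` pairwise defeats `b` in profile `σ`. -/
def pairwiseDefeats (σ : Profile A m) (a b : A) : Prop :=
  (σ.countP fun r => decide (r b < r a)) < (σ.countP fun r => decide (r a < r b))

/-- A set `S` is dominant if every member pairwise defeats every non-member. -/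
def DominantSet [Fintype A] (σ : Profile A m) (S : Finset A) : Prop :=
  ∀ a ∈ S, ∀ b ∉ S, pairwiseDefeats σ a b

/-- The Smith set: the smallest dominant set (the intersection of all dominant sets). -/
def SmithSet [Fintype A] (σ : Profile A m) : Finset A :=
  Finset.univ.filter fun a => ∀ S : Finset A, DominantSet σ S → a ∈ S

/-- `a` is among the top-ranked alternatives of `w`. -/
def isTop (w : WeakRanking A) (a : A) : Prop := ∀ b, w.ge a b

def SmithCriterion [Fintype A] (f : SWF A m) : Prop :=
  ∀ (σ : Profile A m) (a : A), isTop (f σ) a → a ∈ SmithSet σ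

def CondorcetConsistent [Fintype A] (f : SWF A m) : Prop :=
  ∀ (σ : Profile A m) (c : A), SmithSet σ = {c} →
    ∀ a, isTop (f σ) a → a ∈ SmithSet σ

def MajorityWinnerCriterion [Fintype A] (f : SWF A m) : Prop :=
  ∀ (σ : Profile A m) (c : A), SmithSet σ = {c} → σ.length < 2 * topCount σ c →
    ∀ a, isTop (f σ) a → a ∈ SmithSet σ

def PairwiseMajorityConsistent (f : SWF A m) : Prop :=
  ∀ (σ : Profile A m) (r : WeakRanking A),
    (∀ a b, r.strict a b ↔ pairwiseDefeats σ a b) → f σ = r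

def UnanimousSWF (f : SWF A m) : Prop :=
  ∀ (σ : Profile A m) (r : Ranking A m), σ ≠ [] → (∀ x ∈ σ, x = r) →
    f σ = Ranking.toWeak r

/-- Rank of `a` in weak ranking `w`: one plus the number of alternatives strictly above. -/
def rankIn [Fintype A] (w : WeakRanking A) (a : A) : ℕ :=
  1 + (Finset.univ.filter fun b => w.strict b a).card

/-- `r'` is obtained from `r` by (weakly) raising `a`, everything else unchanged. -/
def RaisesWeak (a : A) (r r' : Ranking A m) : Prop :=
  r' a ≤ r a ∧ ∀ b c : A, b ≠ a → c ≠ a → (r b < r c ↔ r' b < r' c)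

/-- Monotonicity of an SWF: raising an alternative never hurts its rank. -/
def MonotonicSWF [Fintype A] (f : SWF A m) : Prop :=
  ∀ (a : A) (σ σ' : Profile A m), List.Forall₂ (RaisesWeak a) σ σ' →
    rankIn (f σ') a ≤ rankIn (f σ) a

/-- Total score of `a` for a list of (position ↦ alternative) ballots of length `ℓ`. -/
def ballotScore [Fintype A] {ℓ : ℕ} (sv : ScoreVec ℓ) (P : List (Fin ℓ → A)) (a : A) : ℝ :=
  (P.map fun b => ∑ i : Fin ℓ, if b i = a then sv.s i else 0).sum

/-- A scoring vector achieves perfect consistency on the given split `(P1, P2)`. -/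
def PerfectConsistency [Fintype A] {ℓ : ℕ} (sv : ScoreVec ℓ)
    (P1 P2 : List (Fin ℓ → A)) : Prop :=
  ∀ a b : A, a ≠ b →
    0 < (ballotScore sv P1 a - ballotScore sv P1 b) *
        (ballotScore sv P2 a - ballotScore sv P2 b)

/-- Complete a `k`-partial ballot to a full ballot on `m` positions by placing the missing
alternatives at the bottom, in a fixed order. -/
def completeBallot [Fintype A] [LinearOrder A] {k m : ℕ} (hk : 0 < k)
    (b : Fin k → A) : Fin m → A := fun j =>
  if h : j.val < k then b ⟨j.val, h⟩
  else ((Finset.univ \ Finset.univ.image b).sort (· ≤ ·)).getD (j.val - k) (b ⟨0, hk⟩)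

/-- `k`-shuffling for (position ↦ alternative) ballots. -/
def shuffleBallots {m : ℕ} (S : Finset (Fin m)) (k : ℕ) (P : List (Fin m → A)) :
    List (Fin m → A) :=
  P.flatMap fun f =>
    (permsOn S).flatMap fun π =>
      List.replicate (k * Nat.factorial m / Nat.factorial S.card) (f ∘ π.symm)


-- Concrete setup for STATEMENTS 13 and 14: alternatives `A = Fin 3` with `a = 0`,
-- `b = 1`, `c = 2`; rankings are given as (alternative ↦ position) bijections.

/-- a ≻ b ≻ c -/
def rABC : Ranking (Fin 3) 3 := Equiv.ofBijective ![0, 1, 2] (by decide)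
/-- a ≻ c ≻ b -/
def rACB : Ranking (Fin 3) 3 := Equiv.ofBijective ![0, 2, 1] (by decide)
/-- b ≻ c ≻ a -/
def rBCA : Ranking (Fin 3) 3 := Equiv.ofBijective ![2, 0, 1] (by decide)

/-- The profile with k voters a≻b≻c, k voters a≻c≻b, and k voters b≻c≻a. -/
def sigmaK (k : ℕ) : Profile (Fin 3) 3 :=
  List.replicate k rABC ++ List.replicate k rACB ++ List.replicate k rBCA


-- ===== Auxiliary lemmas for STATEMENT 13 =====

section Aux

lemma aux_if_nonneg (p : Prop) : (0:ℝ) ≤ if p then 1 else 0 := by split <;> norm_num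

lemma aux_if_le_one (p : Prop) : (if p then (1:ℝ) else 0) ≤ 1 := by split <;> norm_num

lemma aux_if_mono {p q : Prop} (h : p → q) :
    (if p then (1:ℝ) else 0) ≤ if q then 1 else 0 := by
  split_ifs with h1 h2 <;> simp_all

lemma aux_pair_le_one {A : Type*} (w1 w2 : WeakRanking A) (a b : A) :
    (if (w1.strict a b ∧ w2.strict b a) ∨ (w1.strict b a ∧ w2.strict a b) then (1:ℝ) else 0)
      + (if w1.tied a b ∨ w2.tied a b then (1:ℝ) else 0) / 2 ≤ 1 := by
  split_ifs with hD hT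
  · exfalso
    rcases hD with ⟨h1, h2⟩ | ⟨h1, h2⟩ <;> rcases hT with h3 | h3 <;>
      first
        | exact h1.2 h3.2
        | exact h2.2 h3.2
        | exact h1.2 h3.1
        | exact h2.2 h3.1
  all_goals norm_num

lemma aux_D_zero {A : Type*} (w1 w2 : WeakRanking A) (a b : A)
    (h1 : ¬ w1.strict b a) (h2 : ¬ w2.strict b a) :
    (if (w1.strict a b ∧ w2.strict b a) ∨ (w1.strict b a ∧ w2.strict a b) then (1:ℝ) else 0)
      = 0 := by
  rw [if_neg]; tauto

lemma aux_D_zero' {A : Type*} (w1 w2 : WeakRanking A) (a b : A)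
    (h1 : ¬ w1.strict a b) (h2 : ¬ w2.strict a b) :
    (if (w1.strict a b ∧ w2.strict b a) ∨ (w1.strict b a ∧ w2.strict a b) then (1:ℝ) else 0)
      = 0 := by
  rw [if_neg]; tauto

lemma aux_T_comm {A : Type*} (w1 w2 : WeakRanking A) (a b : A) :
    (if w1.tied b a ∨ w2.tied b a then (1:ℝ) else 0)
      = if w1.tied a b ∨ w2.tied a b then (1:ℝ) else 0 := by
  have h : (w1.tied b a ∨ w2.tied b a) ↔ (w1.tied a b ∨ w2.tied a b) := by
    unfold WeakRanking.tied; tauto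
  exact if_congr h rfl rfl

lemma aux_offDiag_sum (f : Fin 3 × Fin 3 → ℝ) :
    ∑ p ∈ Finset.offDiag Finset.univ, f p
      = f (0,1) + f (0,2) + f (1,0) + f (1,2) + f (2,0) + f (2,1) := by
  have hset : Finset.offDiag (Finset.univ : Finset (Fin 3))
      = {(0,1),(0,2),(1,0),(1,2),(2,0),(2,1)} := by decide
  rw [hset, Finset.sum_insert (by decide), Finset.sum_insert (by decide),
    Finset.sum_insert (by decide), Finset.sum_insert (by decide),
    Finset.sum_insert (by decide), Finset.sum_singleton]
  ring

/-- The key pointwise bound for the KT distance on 3 alternatives when alternative `2`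
is never strictly above `0` or `1`. -/
lemma aux_kt3 (w1 w2 : WeakRanking (Fin 3))
    (h10 : ¬ w1.strict 2 0) (h20 : ¬ w2.strict 2 0)
    (h11 : ¬ w1.strict 2 1) (h21 : ¬ w2.strict 2 1) :
    KT w1 w2 ≤ 1 + (if w1.tied 0 2 ∨ w2.tied 0 2 then (1:ℝ) else 0) / 2
      + (if w1.tied 1 2 ∨ w2.tied 1 2 then (1:ℝ) else 0) / 2 := by
  unfold KT
  rw [aux_offDiag_sum]
  have b01 := aux_pair_le_one w1 w2 0 1
  have b10 := aux_pair_le_one w1 w2 1 0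
  have d02 := aux_D_zero w1 w2 0 2 h10 h20
  have d20 := aux_D_zero' w1 w2 2 0 h10 h20
  have d12 := aux_D_zero w1 w2 1 2 h11 h21
  have d21 := aux_D_zero' w1 w2 2 1 h11 h21
  have t20 := aux_T_comm w1 w2 0 2
  have t21 := aux_T_comm w1 w2 1 2
  have hT02 := aux_if_le_one (w1.tied 0 2 ∨ w2.tied 0 2)
  have hT12 := aux_if_le_one (w1.tied 1 2 ∨ w2.tied 1 2)
  dsimp only at *
  rw [d02, d20, d12, d21, t20, t21]
  linarith

lemma aux_count_ge (n m : ℕ) (h : m < n) :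
    (Finset.filter (fun i : Fin n => ¬ (i : ℕ) < m) Finset.univ).card = n - m := by
  have : (Finset.filter (fun i : Fin n => ¬ (i : ℕ) < m) Finset.univ)
      = Finset.Ici (⟨m, h⟩ : Fin n) := by
    ext i; simp [Fin.le_def]
  rw [this, Fin.card_Ici]

lemma aux_count_lt (n m : ℕ) (h : m < n) :
    (Finset.filter (fun i : Fin n => ¬ m ≤ (i : ℕ)) Finset.univ).card = m := by
  have : (Finset.filter (fun i : Fin n => ¬ m ≤ (i : ℕ)) Finset.univ)
      = Finset.Iio (⟨m, h⟩ : Fin n) := by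
    ext i; simp [Fin.lt_def]
  rw [this, Fin.card_Iio]

/-- Number of Boolean assignments forced to `v` on a set of coordinates. -/
lemma aux_count_forced (n : ℕ) (c : Fin n → Prop) (v : Bool) :
    (Finset.univ.filter fun β : Fin n → Bool => ∀ i, c i → β i = v).card
      = 2 ^ ((Finset.univ.filter fun i : Fin n => ¬ c i).card) := by
  have h : (Finset.univ.filter fun β : Fin n → Bool => ∀ i, c i → β i = v)
      = Fintype.piFinset (fun i : Fin n => if c i then {v} else Finset.univ) := by
    ext β
    simp only [Finset.mem_filter, Finset.mem_univ, true_and, Fintype.mem_piFinset]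
    constructor
    · intro h i
      by_cases hc : c i
      · simp [hc, h i hc]
      · simp [hc]
    · intro h i hc
      have := h i
      simpa [hc] using this
  rw [h, Fintype.card_piFinset]
  rw [show (fun i : Fin n => (if c i then ({v} : Finset Bool) else Finset.univ).card)
      = fun i => if c i then 1 else 2 from funext fun i => by split <;> simp]
  rw [Finset.prod_ite]
  simp [Finset.prod_const]

lemma aux_filter_card_irrel {α : Type*} [Fintype α] {p : α → Prop}
    (inst inst' : DecidablePred p) :
    (@Finset.filter _ p inst Finset.univ).card
      = (@Finset.filter _ p inst' Finset.univ).card := by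
  have h : inst = inst' := Subsingleton.elim _ _
  rw [h]

lemma aux_count_A (n m : ℕ) (h : m < n) (v : Bool)
    {inst : DecidablePred fun β : Fin n → Bool => ∀ i : Fin n, (i : ℕ) < m → β i = v} :
    (@Finset.filter _ _ inst Finset.univ).card = 2 ^ (n - m) := by
  rw [aux_filter_card_irrel inst, aux_count_forced n (fun i => (i : ℕ) < m) v]
  congr 1
  rw [aux_filter_card_irrel]
  exact aux_count_ge n m h

lemma aux_count_B (n m : ℕ) (h : m < n) (v : Bool)
    {inst : DecidablePred fun β : Fin n → Bool => ∀ i : Fin n, m ≤ (i : ℕ) → β i = v} :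
    (@Finset.filter _ _ inst Finset.univ).card = 2 ^ m := by
  rw [aux_filter_card_irrel inst, aux_count_forced n (fun i => m ≤ (i : ℕ)) v]
  congr 1
  rw [aux_filter_card_irrel]
  exact aux_count_lt n m h

lemma aux_mem_sigmaK {k : ℕ} {r : Ranking (Fin 3) 3} (hr : r ∈ sigmaK k) :
    r = rABC ∨ r = rACB ∨ r = rBCA := by
  simp only [sigmaK, List.mem_append, List.mem_replicate] at hr
  tauto

lemma aux_sigma_c_not_top {k : ℕ} {r : Ranking (Fin 3) 3} (hr : r ∈ sigmaK k) :
    ((r 2 : Fin 3) : ℕ) ≠ 0 := by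
  rcases aux_mem_sigmaK hr with h | h | h <;> subst h <;> decide

lemma aux_mem_subProfile {A : Type*} {m : ℕ} {σ : Profile A m} {β : Fin σ.length → Bool}
    {b : Bool} {r : Ranking A m} (hr : r ∈ subProfile σ β b) : r ∈ σ := by
  simp only [subProfile, List.mem_map, List.mem_filter, List.mem_finRange] at hr
  obtain ⟨i, _, rfl⟩ := hr
  exact List.get_mem σ i

lemma aux_get_mem_subProfile {A : Type*} {m : ℕ} {σ : Profile A m}
    {β : Fin σ.length → Bool} {b : Bool} {i : Fin σ.length} (hi : β i = b) :
    σ.get i ∈ subProfile σ β b := by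
  simp only [subProfile, List.mem_map, List.mem_filter, List.mem_finRange]
  exact ⟨i, by simp [hi], rfl⟩

lemma aux_plurality_s_nonneg (i : Fin 3) : 0 ≤ (pluralityVec 3 (by norm_num)).s i := by
  simp only [pluralityVec]; split <;> norm_num

lemma aux_totalScore_nonneg (σ' : Profile (Fin 3) 3) (x : Fin 3) :
    0 ≤ totalScore (pluralityVec 3 (by norm_num)) σ' x := by
  apply List.sum_nonneg
  intro y hy
  simp only [List.mem_map] at hy
  obtain ⟨r, _, rfl⟩ := hy
  exact aux_plurality_s_nonneg _

lemma aux_totalScore_c_zero {σ' : Profile (Fin 3) 3}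
    (hσ' : ∀ r ∈ σ', ((r 2 : Fin 3) : ℕ) ≠ 0) :
    totalScore (pluralityVec 3 (by norm_num)) σ' 2 = 0 := by
  apply List.sum_eq_zero
  intro y hy
  simp only [List.mem_map] at hy
  obtain ⟨r, hr, rfl⟩ := hy
  simp [pluralityVec, hσ' r hr]
  exact fun h => hσ' r hr (by rw [h]; rfl)

lemma aux_not_strict_c {σ' : Profile (Fin 3) 3}
    (hσ' : ∀ r ∈ σ', ((r 2 : Fin 3) : ℕ) ≠ 0) (x : Fin 3) :
    ¬ (applySplit (posSWF (pluralityVec 3 (by norm_num))) σ').strict 2 x := by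
  unfold applySplit
  split
  · rintro ⟨_, h⟩; exact h trivial
  · rintro ⟨h1, h2⟩
    simp only [posSWF] at h1 h2
    have hc := aux_totalScore_c_zero hσ'
    have hx := aux_totalScore_nonneg σ' x
    exact h2 (by linarith)

/-- If the plurality output on side `b` ties `x` with `c = 2`, then no voter ranking `x`
first can be on side `b`. -/
lemma aux_tied_forces {k : ℕ} {β : Fin (sigmaK k).length → Bool} {b : Bool} {x : Fin 3}
    (htied : (applySplit (posSWF (pluralityVec 3 (by norm_num)))
        (subProfile (sigmaK k) β b)).tied x 2)
    {i : Fin (sigmaK k).length} (hi : ((sigmaK k).get i) x = 0) : β i ≠ b := by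
  intro hb
  have hmem : (sigmaK k).get i ∈ subProfile (sigmaK k) β b := aux_get_mem_subProfile hb
  have hne : subProfile (sigmaK k) β b ≠ [] := List.ne_nil_of_mem hmem
  unfold applySplit at htied
  rw [if_neg hne] at htied
  simp only [posSWF, WeakRanking.tied] at htied
  have hc : totalScore (pluralityVec 3 (by norm_num)) (subProfile (sigmaK k) β b) 2 = 0 :=
    aux_totalScore_c_zero (fun r hr => aux_sigma_c_not_top (aux_mem_subProfile hr))
  have hone : (1:ℝ) ≤ totalScore (pluralityVec 3 (by norm_num)) (subProfile (sigmaK k) β b) x := by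
    have h1 : (pluralityVec 3 (by norm_num)).s (((sigmaK k).get i) x)
        ∈ (subProfile (sigmaK k) β b).map
          fun r => (pluralityVec 3 (by norm_num)).s (r x) :=
      List.mem_map_of_mem hmem
    have h2 : (pluralityVec 3 (by norm_num)).s (((sigmaK k).get i) x) = 1 := by
      rw [hi]; simp [pluralityVec]
    calc (1:ℝ) = _ := h2.symm
    _ ≤ _ := List.single_le_sum (fun y hy => by
        simp only [List.mem_map] at hy
        obtain ⟨r, _, rfl⟩ := hy
        exact aux_plurality_s_nonneg _) _ h1
  have := htied.2
  rw [hc] at this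
  linarith [htied.1, htied.2, hc, hone]

lemma aux_sigmaK_length (k : ℕ) : (sigmaK k).length = 3 * k := by
  simp [sigmaK]; ring

lemma aux_get_a {k : ℕ} (i : Fin (sigmaK k).length) (hi : (i : ℕ) < 2 * k) :
    ((sigmaK k).get i) 0 = 0 := by
  have h := aux_sigmaK_length k
  rcases i with ⟨i, hlen⟩
  simp only [List.get_eq_getElem, sigmaK] at *
  rw [List.getElem_append_left (by simp; omega)]
  by_cases h1 : i < k
  · rw [List.getElem_append_left (by simpa using h1)]
    rw [List.getElem_replicate]
    decide
  · rw [List.getElem_append_right (by simpa using h1)]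
    rw [List.getElem_replicate]
    decide

lemma aux_get_b {k : ℕ} (i : Fin (sigmaK k).length) (hi : 2 * k ≤ (i : ℕ)) :
    ((sigmaK k).get i) 1 = 0 := by
  rcases i with ⟨i, hlen⟩
  simp only [List.get_eq_getElem, sigmaK] at *
  rw [List.getElem_append_right (by simp; omega)]
  rw [List.getElem_replicate]
  decide

end Aux

lemma aux_if_or {p q r : Prop} (h : p → q ∨ r) :
    (if p then (1:ℝ) else 0) ≤ (if q then (1:ℝ) else 0) + (if r then (1:ℝ) else 0) := by
  split_ifs <;> simp_all <;> norm_num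

set_option maxHeartbeats 2000000 in
/-- on the example profile (k ≥ 2), the expected Kendall-Tau disagreement of
plurality across a random split is at most `1 + 2^{-2k} + 2^{-k} ≤ 1.3125`. -/
theorem plurality_disagreement_bound (k : ℕ) (hk : 2 ≤ k) :
    expDisagree (posSWF (pluralityVec 3 (by norm_num))) (sigmaK k)
        ≤ 1 + (1 / 2 : ℝ) ^ (2 * k) + (1 / 2 : ℝ) ^ k ∧
    1 + (1 / 2 : ℝ) ^ (2 * k) + (1 / 2 : ℝ) ^ k ≤ 1.3125 := by
  have hlen := aux_sigmaK_length k
  constructor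
  · unfold expDisagree
    have hpos : (0:ℝ) < 2 ^ (sigmaK k).length := by positivity
    rw [div_le_iff₀ hpos]
    have step1 : ∀ β : Fin (sigmaK k).length → Bool,
        KT (applySplit (posSWF (pluralityVec 3 (by norm_num))) (subProfile (sigmaK k) β true))
           (applySplit (posSWF (pluralityVec 3 (by norm_num))) (subProfile (sigmaK k) β false))
          ≤ 1 + ((if (∀ i : Fin (sigmaK k).length, (i:ℕ) < 2*k → β i = false) then (1:ℝ) else 0)
                + (if (∀ i : Fin (sigmaK k).length, (i:ℕ) < 2*k → β i = true) then (1:ℝ) else 0)) / 2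
            + ((if (∀ i : Fin (sigmaK k).length, 2*k ≤ (i:ℕ) → β i = false) then (1:ℝ) else 0)
                + (if (∀ i : Fin (sigmaK k).length, 2*k ≤ (i:ℕ) → β i = true) then (1:ℝ) else 0)) / 2 := by
      intro β
      have hels : ∀ b : Bool, ∀ r ∈ subProfile (sigmaK k) β b, ((r 2 : Fin 3) : ℕ) ≠ 0 :=
        fun b r hr => aux_sigma_c_not_top (aux_mem_subProfile hr)
      have h10 := aux_not_strict_c (hels true) 0
      have h20 := aux_not_strict_c (hels false) 0
      have h11 := aux_not_strict_c (hels true) 1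
      have h21 := aux_not_strict_c (hels false) 1
      refine le_trans (aux_kt3 _ _ h10 h20 h11 h21) ?_
      have hA : ((applySplit (posSWF (pluralityVec 3 (by norm_num)))
              (subProfile (sigmaK k) β true)).tied 0 2 ∨
            (applySplit (posSWF (pluralityVec 3 (by norm_num)))
              (subProfile (sigmaK k) β false)).tied 0 2) →
          ((∀ i : Fin (sigmaK k).length, (i:ℕ) < 2*k → β i = false) ∨ (∀ i : Fin (sigmaK k).length, (i:ℕ) < 2*k → β i = true)) := by
        rintro (h | h)
        · exact Or.inl fun i hi => by simpa using aux_tied_forces h (aux_get_a i hi)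
        · exact Or.inr fun i hi => by simpa using aux_tied_forces h (aux_get_a i hi)
      have hB : ((applySplit (posSWF (pluralityVec 3 (by norm_num)))
              (subProfile (sigmaK k) β true)).tied 1 2 ∨
            (applySplit (posSWF (pluralityVec 3 (by norm_num)))
              (subProfile (sigmaK k) β false)).tied 1 2) →
          ((∀ i : Fin (sigmaK k).length, 2*k ≤ (i:ℕ) → β i = false) ∨ (∀ i : Fin (sigmaK k).length, 2*k ≤ (i:ℕ) → β i = true)) := by
        rintro (h | h)
        · exact Or.inl fun i hi => by simpa using aux_tied_forces h (aux_get_b i hi)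
        · exact Or.inr fun i hi => by simpa using aux_tied_forces h (aux_get_b i hi)
      have bA : (if ((applySplit (posSWF (pluralityVec 3 (by norm_num)))
              (subProfile (sigmaK k) β true)).tied 0 2 ∨
            (applySplit (posSWF (pluralityVec 3 (by norm_num)))
              (subProfile (sigmaK k) β false)).tied 0 2) then (1:ℝ) else 0)
          ≤ (if (∀ i : Fin (sigmaK k).length, (i:ℕ) < 2*k → β i = false) then (1:ℝ) else 0)
            + (if (∀ i : Fin (sigmaK k).length, (i:ℕ) < 2*k → β i = true) then (1:ℝ) else 0) := by
        split_ifs <;> try norm_num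
        rename_i hp hq hr
        exact absurd (hA hp) (by tauto)
      have bB : (if ((applySplit (posSWF (pluralityVec 3 (by norm_num)))
              (subProfile (sigmaK k) β true)).tied 1 2 ∨
            (applySplit (posSWF (pluralityVec 3 (by norm_num)))
              (subProfile (sigmaK k) β false)).tied 1 2) then (1:ℝ) else 0)
          ≤ (if (∀ i : Fin (sigmaK k).length, 2*k ≤ (i:ℕ) → β i = false) then (1:ℝ) else 0)
            + (if (∀ i : Fin (sigmaK k).length, 2*k ≤ (i:ℕ) → β i = true) then (1:ℝ) else 0) := by
        split_ifs <;> try norm_num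
        rename_i hp hq hr
        exact absurd (hB hp) (by tauto)
      linarith
    have c1 : 2*k < (sigmaK k).length := by omega
    calc (∑ β : Fin (sigmaK k).length → Bool,
            KT (applySplit (posSWF (pluralityVec 3 (by norm_num))) (subProfile (sigmaK k) β true))
               (applySplit (posSWF (pluralityVec 3 (by norm_num))) (subProfile (sigmaK k) β false)))
        ≤ ∑ β : Fin (sigmaK k).length → Bool,
            (1 + ((if (∀ i : Fin (sigmaK k).length, (i:ℕ) < 2*k → β i = false) then (1:ℝ) else 0)
                + (if (∀ i : Fin (sigmaK k).length, (i:ℕ) < 2*k → β i = true) then (1:ℝ) else 0)) / 2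
              + ((if (∀ i : Fin (sigmaK k).length, 2*k ≤ (i:ℕ) → β i = false) then (1:ℝ) else 0)
                + (if (∀ i : Fin (sigmaK k).length, 2*k ≤ (i:ℕ) → β i = true) then (1:ℝ) else 0)) / 2) :=
          Finset.sum_le_sum fun β _ => step1 β
      _ = (∑ _β : Fin (sigmaK k).length → Bool, (1:ℝ))
          + ((∑ β : Fin (sigmaK k).length → Bool,
                if (∀ i : Fin (sigmaK k).length, (i:ℕ) < 2*k → β i = false) then (1:ℝ) else 0)
            + (∑ β : Fin (sigmaK k).length → Bool,
                if (∀ i : Fin (sigmaK k).length, (i:ℕ) < 2*k → β i = true) then (1:ℝ) else 0)) / 2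
          + ((∑ β : Fin (sigmaK k).length → Bool,
                if (∀ i : Fin (sigmaK k).length, 2*k ≤ (i:ℕ) → β i = false) then (1:ℝ) else 0)
            + (∑ β : Fin (sigmaK k).length → Bool,
                if (∀ i : Fin (sigmaK k).length, 2*k ≤ (i:ℕ) → β i = true) then (1:ℝ) else 0)) / 2 := by
          simp only [Finset.sum_add_distrib, ← Finset.sum_div]
      _ ≤ (1 + (1/2:ℝ)^(2*k) + (1/2:ℝ)^k) * 2 ^ (sigmaK k).length := by
          rw [Finset.sum_boole, Finset.sum_boole, Finset.sum_boole, Finset.sum_boole,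
            aux_count_A _ _ c1, aux_count_A _ _ c1, aux_count_B _ _ c1, aux_count_B _ _ c1]
          have e1 : ∑ _β : Fin (sigmaK k).length → Bool, (1:ℝ) = 2^(3*k) := by
            simp [Finset.card_univ, hlen]
          have e2 : (2:ℝ) ^ (sigmaK k).length = 2^(3*k) := by rw [hlen]
          have h3 : (sigmaK k).length - 2*k = k := by omega
          rw [e1, e2, h3]
          have hid : ((1:ℝ) + (1/2)^(2*k) + (1/2)^k) * 2^(3*k)
              = 2^(3*k) + 2^k + 2^(2*k) := by
            rw [div_pow, div_pow]
            field_simp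
            ring
          rw [hid]
          push_cast
          linarith
  · have h1 : ((1:ℝ)/2)^(2*k) ≤ (1/2)^4 :=
      pow_le_pow_of_le_one (by norm_num) (by norm_num) (by omega)
    have h2 : ((1:ℝ)/2)^k ≤ (1/2)^2 :=
      pow_le_pow_of_le_one (by norm_num) (by norm_num) hk
    norm_num at h1 h2 ⊢
    linarith

end
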